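/- Let K be a field of characteristic not 2, E: y² = (x−α₁)(x−α₂)(x−α₃) with distinct αᵢ ∈ K. Let P = (x₀,y₀) ∈ E(K) and let Q be a half of P corresponding to square roots (r₁, r₂, r₃) with r₁r₂r₃ = −y₀. For a fixed index i, let 𝒬ᵢ be the half of P corresponding to the choice where rᵢ keeps its sign and the other two roots change sign. Then 𝒬ᵢ − Q = Wᵢ, where Wᵢ = (αᵢ, 0) is the 2-torsion point. -/

import Mathlib

/-- The elliptic curve `y² = (x − α 0)(x − α 1)(x − α 2)` as an affine Weierstrass curve. -/
def cubicCurve {K : Type*} [Field K] (α : Fin 3 → K) : WeierstrassCurve.Affine K :=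
  { a₁ := 0, a₂ := -(α 0 + α 1 + α 2), a₃ := 0,
    a₄ := α 0 * α 1 + α 1 * α 2 + α 2 * α 0, a₆ := -(α 0 * α 1 * α 2) }

/-- The square roots with the sign of all but the `i`-th one flipped. -/
def flipExcept {K : Type*} [Field K] (r : Fin 3 → K) (i : Fin 3) : Fin 3 → K :=
  fun l => if l = i then r l else -(r l)

open WeierstrassCurve.Affine in
lemma someEqSome {K : Type*} [Field K] {W : WeierstrassCurve.Affine K} {x₁ y₁ x₂ y₂ : K}
    (h₁ : W.Nonsingular x₁ y₁) (h₂ : W.Nonsingular x₂ y₂) (hx : x₁ = x₂) (hy : y₁ = y₂) :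
    Point.some _ _ h₁ = Point.some _ _ h₂ := by subst hx; subst hy; rfl

open Classical in
open WeierstrassCurve.Affine in
lemma keyLemma {K : Type*} [Field K] (α : Fin 3 → K) (hα : Function.Injective α)
    (x₀ : K) (i j k : Fin 3) (hij : i ≠ j) (hik : i ≠ k) (hjk : j ≠ k)
    (a b c : K) (ha : a ^ 2 = x₀ - α i) (hb : b ^ 2 = x₀ - α j) (hc : c ^ 2 = x₀ - α k)
    (xq yq xqi yqi : K)
    (hxq : xq = x₀ + (a * b + b * c + c * a)) (hyq : yq = -((a + b) * (b + c) * (c + a)))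
    (hxqi : xqi = x₀ + (b * c - a * b - a * c)) (hyqi : yqi = (a - b) * (b + c) * (a - c))
    (hQ : (cubicCurve α).Nonsingular xq yq) (hQi : (cubicCurve α).Nonsingular xqi yqi) :
    ∃ hWi : (cubicCurve α).Nonsingular (α i) 0,
      Point.some _ _ hQi - Point.some _ _ hQ = Point.some _ _ hWi := by
  subst hxq hyq hxqi hyqi
  -- symmetric functions agree
  have hs1 : α 0 + α 1 + α 2 = α i + α j + α k := by
    fin_cases i <;> fin_cases j <;> fin_cases k <;> simp_all <;> first | ring1 | exact Or.inl (by ring1)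
  have hs2 : α 0 * α 1 + α 1 * α 2 + α 2 * α 0 = α i * α j + α j * α k + α k * α i := by
    fin_cases i <;> fin_cases j <;> fin_cases k <;> simp_all <;> first | ring1 | exact Or.inl (by ring1)
  have hs3 : α 0 * α 1 * α 2 = α i * α j * α k := by
    fin_cases i <;> fin_cases j <;> fin_cases k <;> simp_all <;> first | ring1 | exact Or.inl (by ring1)
  have hαi : α i = x₀ - a ^ 2 := by linear_combination ha
  have hαj : α j = x₀ - b ^ 2 := by linear_combination hb
  have hαk : α k = x₀ - c ^ 2 := by linear_combination hc
  have hab : a + b ≠ 0 := fun h => hij (hα (by linear_combination ha - hb - (a - b) * h))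
  have hac : a + c ≠ 0 := fun h => hik (hα (by linear_combination ha - hc - (a - c) * h))
  have hbc : b + c ≠ 0 := fun h => hjk (hα (by linear_combination hb - hc - (b - c) * h))
  have hWi : (cubicCurve α).Nonsingular (α i) 0 := by
    rw [nonsingular_iff, equation_iff]
    constructor
    · show (0:K) ^ 2 + 0 * α i * 0 + 0 * 0 = α i ^ 3 + -(α 0 + α 1 + α 2) * α i ^ 2 +
        (α 0 * α 1 + α 1 * α 2 + α 2 * α 0) * α i + -(α 0 * α 1 * α 2)
      rw [hs1, hs2, hs3]; ring
    · left
      show (0:K) * 0 ≠ 3 * α i ^ 2 + 2 * -(α 0 + α 1 + α 2) * α i +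
        (α 0 * α 1 + α 1 * α 2 + α 2 * α 0)
      rw [hs1, hs2]
      intro h
      have h' : (α i - α j) * (α i - α k) = 0 := by linear_combination -h
      rcases mul_eq_zero.mp h' with h'' | h''
      · exact hij (hα (by linear_combination h''))
      · exact hik (hα (by linear_combination h''))
  have hx : α i ≠ x₀ + (a * b + b * c + c * a) := by
    intro h
    exact mul_ne_zero hab hac (by linear_combination ha - h)
  refine ⟨hWi, ?_⟩
  rw [sub_eq_iff_eq_add, WeierstrassCurve.Affine.Point.add_of_X_ne hx]
  have hd : α i - (x₀ + (a * b + b * c + c * a)) ≠ 0 := sub_ne_zero.mpr hx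
  refine someEqSome _ _ ?_ ?_
  · rw [addX, slope_of_X_ne hx]
    show x₀ + (b * c - a * b - a * c) =
      ((0 - -((a + b) * (b + c) * (c + a))) / (α i - (x₀ + (a * b + b * c + c * a)))) ^ 2 +
      0 * _ - -(α 0 + α 1 + α 2) - α i - (x₀ + (a * b + b * c + c * a))
    rw [hs1, hαi, hαj, hαk]
    have hd2 : x₀ - a ^ 2 - (x₀ + (a * b + b * c + c * a)) ≠ 0 := by
      intro h
      exact mul_ne_zero hab hac (by linear_combination -h)
    rw [show x₀ - a ^ 2 - (x₀ + (a * b + b * c + c * a)) = -((a + b) * (a + c)) by ring]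
    have hd3 : (a + b) * (a + c) ≠ 0 := mul_ne_zero hab hac
    field_simp
    ring
  · rw [addY, negAddY, addX, slope_of_X_ne hx, negY]
    simp only [cubicCurve]
    rw [hs1, hαi, hαj, hαk]
    have hd2 : x₀ - a ^ 2 - (x₀ + (a * b + b * c + c * a)) ≠ 0 := by
      intro h
      exact mul_ne_zero hab hac (by linear_combination -h)
    rw [show x₀ - a ^ 2 - (x₀ + (a * b + b * c + c * a)) = -((a + b) * (a + c)) by ring]
    have hd3 : (a + b) * (a + c) ≠ 0 := mul_ne_zero hab hac
    field_simp
    ring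

open Classical in
theorem half_point_sign_change_diff {K : Type*} [Field K] (h2 : (2 : K) ≠ 0)
    (α r : Fin 3 → K) (hα : Function.Injective α) (x₀ y₀ : K)
    (hP : (cubicCurve α).Nonsingular x₀ y₀)
    (hr : ∀ l, r l ^ 2 = x₀ - α l) (hprod : r 0 * r 1 * r 2 = -y₀) (i : Fin 3)
    (hQ : (cubicCurve α).Nonsingular
      (x₀ + (r 0 * r 1 + r 1 * r 2 + r 2 * r 0))
      (-((r 0 + r 1) * (r 1 + r 2) * (r 2 + r 0))))
    (hQi : (cubicCurve α).Nonsingular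
      (x₀ + (flipExcept r i 0 * flipExcept r i 1 + flipExcept r i 1 * flipExcept r i 2 +
        flipExcept r i 2 * flipExcept r i 0))
      (-((flipExcept r i 0 + flipExcept r i 1) * (flipExcept r i 1 + flipExcept r i 2) *
        (flipExcept r i 2 + flipExcept r i 0)))) :
    ∃ hWi : (cubicCurve α).Nonsingular (α i) 0,
      WeierstrassCurve.Affine.Point.some _ _ hQi - WeierstrassCurve.Affine.Point.some _ _ hQ =
        WeierstrassCurve.Affine.Point.some _ _ hWi := by
  fin_cases i
  · exact keyLemma α hα x₀ 0 1 2 (by decide) (by decide) (by decide) (r 0) (r 1) (r 2)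
      (hr 0) (hr 1) (hr 2) _ _ _ _ (by ring) (by ring)
      (by simp [flipExcept]; ring) (by simp [flipExcept]; ring) hQ hQi
  · exact keyLemma α hα x₀ 1 0 2 (by decide) (by decide) (by decide) (r 1) (r 0) (r 2)
      (hr 1) (hr 0) (hr 2) _ _ _ _ (by ring) (by ring)
      (by simp [flipExcept]; ring) (by simp [flipExcept]; ring) hQ hQi
  · exact keyLemma α hα x₀ 2 0 1 (by decide) (by decide) (by decide) (r 2) (r 0) (r 1)
      (hr 2) (hr 0) (hr 1) _ _ _ _ (by ring) (by ring)
      (by simp [flipExcept]; ring) (by simp [flipExcept]; ring) hQ hQi
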